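/- Almost surely, S_{N_t}/t → E(ξ₁)/E(T₁) as t → ∞. -/

import Mathlib

open MeasureTheory ProbabilityTheory Filter Finset Topology

private lemma renewal_aux (ξs Ts : ℕ → ℝ) (A B : ℝ) (hB : 0 < B)
    (hS : Tendsto (fun n : ℕ => (∑ k ∈ range n, ξs k) / n) atTop (𝓝 A))
    (hU : Tendsto (fun n : ℕ => (∑ j ∈ range n, Ts j) / n) atTop (𝓝 B)) :
    Tendsto (fun t : ℝ =>
      (∑ k ∈ range (sSup {n : ℕ | ∑ j ∈ range n, Ts j ≤ t}), ξs k) / t)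
      atTop (𝓝 (A / B)) := by
  set U : ℕ → ℝ := fun n => ∑ j ∈ range n, Ts j with hUdef
  set N : ℝ → ℕ := fun t => sSup {n : ℕ | U n ≤ t} with hNdef
  have hUtop : Tendsto U atTop atTop := by
    have h1 : Tendsto (fun n : ℕ => (U n / n) * n) atTop atTop :=
      Tendsto.pos_mul_atTop hB hU tendsto_natCast_atTop_atTop
    refine h1.congr' ?_
    filter_upwards [eventually_ge_atTop 1] with n hn
    field_simp
  have hbdd : ∀ t : ℝ, BddAbove {n : ℕ | U n ≤ t} := by
    intro t
    obtain ⟨M, hM⟩ := (hUtop.eventually (eventually_gt_atTop t)).exists_forall_of_atTop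
    refine ⟨M, fun n hn => ?_⟩
    by_contra h
    exact absurd hn (not_le.2 (hM n (le_of_not_ge h)))
  have hNtop : Tendsto N atTop atTop := by
    rw [tendsto_atTop]
    intro n
    filter_upwards [eventually_ge_atTop (U n)] with t ht
    exact le_csSup (hbdd t) ht
  have hmem : ∀ t : ℝ, 0 ≤ t → U (N t) ≤ t := by
    intro t ht
    have : N t ∈ {n : ℕ | U n ≤ t} := by
      apply Nat.sSup_mem ⟨0, by simpa [hUdef] using ht⟩ (hbdd t)
    exact this
  have hnmem : ∀ t : ℝ, t < U (N t + 1) := by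
    intro t
    by_contra h
    have : N t + 1 ≤ N t := le_csSup (hbdd t) (not_lt.1 h)
    omega
  have hN1 : ∀ᶠ t : ℝ in atTop, 1 ≤ N t := hNtop.eventually (eventually_ge_atTop 1)
  -- t / N t → B
  have hlow : Tendsto (fun t : ℝ => U (N t) / (N t : ℝ)) atTop (𝓝 B) := hU.comp hNtop
  have hratio : Tendsto (fun n : ℕ => ((n : ℝ) + 1) / n) atTop (𝓝 1) := by
    have h1 : Tendsto (fun n : ℕ => 1 + 1 / (n : ℝ)) atTop (𝓝 (1 + 0)) :=
      tendsto_const_nhds.add tendsto_one_div_atTop_nhds_zero_nat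
    rw [add_zero] at h1
    refine h1.congr' ?_
    filter_upwards [eventually_ge_atTop 1] with n hn
    have hn' : (n : ℝ) ≠ 0 := Nat.cast_ne_zero.2 (by omega)
    field_simp
  have hhigh : Tendsto (fun t : ℝ => U (N t + 1) / (N t : ℝ)) atTop (𝓝 B) := by
    have h1 : Tendsto (fun n : ℕ => (U (n + 1) / ((n : ℝ) + 1)) * (((n : ℝ) + 1) / n))
        atTop (𝓝 (B * 1)) := by
      refine Tendsto.mul ?_ hratio
      have := hU.comp (tendsto_add_atTop_nat 1)
      refine this.congr fun n => ?_
      simp only [hUdef, Function.comp]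
      push_cast
      ring_nf
    rw [mul_one] at h1
    have h2 := h1.comp hNtop
    refine h2.congr' ?_
    filter_upwards [hN1] with t ht
    have hpos : (0 : ℝ) < (N t : ℝ) + 1 := by positivity
    simp only [Function.comp]
    rw [div_mul_div_comm, mul_comm ((N t : ℝ) + 1), mul_div_mul_right _ _ hpos.ne']
  have htN : Tendsto (fun t : ℝ => t / (N t : ℝ)) atTop (𝓝 B) := by
    refine tendsto_of_tendsto_of_tendsto_of_le_of_le' hlow hhigh ?_ ?_
    · filter_upwards [eventually_ge_atTop (0 : ℝ), hN1] with t ht hN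
      have hNpos : (0 : ℝ) < (N t : ℝ) := by exact_mod_cast hN
      exact div_le_div_of_nonneg_right (hmem t ht) hNpos.le
    · filter_upwards [hN1] with t hN
      have hNpos : (0 : ℝ) < (N t : ℝ) := by exact_mod_cast hN
      exact div_le_div_of_nonneg_right (hnmem t).le hNpos.le
  have hNt : Tendsto (fun t : ℝ => (N t : ℝ) / t) atTop (𝓝 B⁻¹) := by
    have := htN.inv₀ hB.ne'
    simpa [inv_div] using this
  have hfinal : Tendsto (fun t : ℝ =>
      ((∑ k ∈ range (N t), ξs k) / (N t : ℝ)) * ((N t : ℝ) / t)) atTop (𝓝 (A * B⁻¹)) :=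
    (hS.comp hNtop).mul hNt
  rw [div_eq_mul_inv]
  refine hfinal.congr' ?_
  filter_upwards [hN1] with t hN
  have hNpos : ((N t : ℝ)) ≠ 0 := by
    have : (0 : ℝ) < (N t : ℝ) := by exact_mod_cast hN
    exact this.ne'
  rw [div_mul_div_comm, mul_comm ((N t : ℝ)) t, mul_div_mul_right _ _ hNpos]


/-- Renewal-reward strong law of large numbers: for an i.i.d. sequence of pairs
`(ξ_k, T_k)` with `T > 0` a.s., `E|ξ| < ∞`, `E T < ∞`, setting
`S_n = ξ_0 + ⋯ + ξ_{n-1}`, `U_n = T_0 + ⋯ + T_{n-1}` and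
`N_t = max {n : U_n ≤ t}`, almost surely `S_{N_t}/t → E ξ / E T` as `t → ∞`. -/
theorem renewal_reward_strong_law
    {Ω : Type*} [MeasureSpace Ω] [IsProbabilityMeasure (ℙ : Measure Ω)]
    (ξ T : ℕ → Ω → ℝ)
    (hmeas : ∀ k, Measurable fun ω => (ξ k ω, T k ω))
    (hindep : iIndepFun (fun k ω => (ξ k ω, T k ω)) ℙ)
    (hident : ∀ k,
      IdentDistrib (fun ω => (ξ k ω, T k ω)) (fun ω => (ξ 0 ω, T 0 ω)) ℙ ℙ)
    (hTpos : ∀ᵐ ω ∂ℙ, 0 < T 0 ω)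
    (hξint : Integrable (ξ 0) ℙ) (hTint : Integrable (T 0) ℙ) :
    ∀ᵐ ω ∂ℙ, Tendsto
      (fun t : ℝ =>
        (∑ k ∈ Finset.range (sSup {n : ℕ | ∑ j ∈ Finset.range n, T j ω ≤ t}),
          ξ k ω) / t)
      atTop (nhds ((∫ ω, ξ 0 ω ∂ℙ) / ∫ ω, T 0 ω ∂ℙ)) := by
  -- independence and identical distribution of the coordinates
  have hindepξ : iIndepFun ξ ℙ :=
    hindep.comp (fun _ => Prod.fst) (fun _ => measurable_fst)
  have hindepT : iIndepFun T ℙ :=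
    hindep.comp (fun _ => Prod.snd) (fun _ => measurable_snd)
  have hidentξ : ∀ k, IdentDistrib (ξ k) (ξ 0) ℙ ℙ := fun k =>
    (hident k).comp measurable_fst
  have hidentT : ∀ k, IdentDistrib (T k) (T 0) ℙ ℙ := fun k =>
    (hident k).comp measurable_snd
  -- strong laws
  have hSlln := strong_law_ae_real ξ hξint
    (fun i j hij => hindepξ.indepFun hij) hidentξ
  have hTlln := strong_law_ae_real T hTint
    (fun i j hij => hindepT.indepFun hij) hidentT
  -- E T > 0
  have hETpos : 0 < ∫ ω, T 0 ω ∂ℙ := by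
    rw [integral_pos_iff_support_of_nonneg_ae
      (hTpos.mono fun ω h => h.le) hTint]
    rw [pos_iff_ne_zero]
    intro h
    have h0 : ∀ᵐ ω ∂ℙ, T 0 ω = 0 := by
      have := measure_eq_zero_iff_ae_notMem.1 h
      simpa [Function.mem_support, not_not] using this
    obtain ⟨ω, hω1, hω2⟩ := (hTpos.and h0).exists
    exact absurd hω2 hω1.ne'
  filter_upwards [hSlln, hTlln] with ω h1 h2
  exact renewal_aux (fun k => ξ k ω) (fun k => T k ω) _ _ hETpos h1 h2
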